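/- Let n ≥ 2, b > 0, and let 0 < λ₂ ≤ ⋯ ≤ λₙ be positive reals. For λ > 0 and 0 ≤ τ < π/(2λ), define f_λ(τ) = cos(λτ)/(λ(1 − sin(λτ))). Let Q be an orthogonal n×n matrix and Mₙ = Iₙ − (1/n)1ₙ1ₙᵀ, and for τ ≥ 0 define Σ(τ) = (b²/2) Mₙ Q diag(0, f_{λ₂}(τ), …, f_{λₙ}(τ)) Qᵀ Mₙ. Fix a nominal delay τ₀ > 0 and α ∈ [0, 1) with (1 + α)τ₀ < π/(2λₙ), and define ε⁺ = max_{2 ≤ i ≤ n} (f_{λᵢ}((1 + α)τ₀) − f_{λᵢ}(τ₀)) / f_{λᵢ}(τ₀) and ε⁻ = max_{2 ≤ i ≤ n} (f_{λᵢ}(τ₀) − f_{λᵢ}((1 − α)τ₀)) / f_{λᵢ}(τ₀). Then for every τ with (1 − α)τ₀ ≤ τ ≤ (1 + α)τ₀, one has (1 − ε⁻)Σ(τ₀) ⪯ Σ(τ) ⪯ (1 + ε⁺)Σ(τ₀) in the Loewner order. -/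
import Mathlib

open Matrix Real

set_option maxHeartbeats 800000

lemma frac_mono_aux {a c : ℝ} (ha : 0 ≤ a) (hac : a ≤ c) (hc : c < π / 2) :
    Real.cos a / (1 - Real.sin a) ≤ Real.cos c / (1 - Real.sin c) := by
  have hpi := Real.pi_pos
  have hca : 0 < Real.cos a :=
    Real.cos_pos_of_mem_Ioo ⟨by linarith, by linarith⟩
  have hcc : 0 < Real.cos c :=
    Real.cos_pos_of_mem_Ioo ⟨by linarith, hc⟩
  have hsa : Real.sin a < 1 := by
    nlinarith [Real.sin_sq_add_cos_sq a, Real.neg_one_le_sin a, Real.sin_le_one a]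
  have hsc : Real.sin c < 1 := by
    nlinarith [Real.sin_sq_add_cos_sq c, Real.neg_one_le_sin c, Real.sin_le_one c]
  rw [div_le_div_iff₀ (by linarith) (by linarith)]
  have hkey : Real.sin ((a + c) / 2) ≤ Real.cos ((c - a) / 2) := by
    rw [← Real.sin_pi_div_two_sub]
    exact Real.strictMonoOn_sin.monotoneOn
      (Set.mem_Icc.2 ⟨by linarith, by linarith⟩)
      (Set.mem_Icc.2 ⟨by linarith, by linarith⟩) (by linarith)
  have h1 : Real.cos a - Real.cos c = 2 * Real.sin ((a + c) / 2) * Real.sin ((c - a) / 2) := by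
    rw [Real.cos_sub_cos]
    have h : Real.sin ((a - c) / 2) = -Real.sin ((c - a) / 2) := by
      rw [← Real.sin_neg]; ring_nf
    rw [h]; ring
  have h2 := Real.sin_two_mul ((c - a) / 2)
  rw [show 2 * ((c - a) / 2) = c - a by ring] at h2
  have h3 : 0 ≤ Real.sin ((c - a) / 2) :=
    Real.sin_nonneg_of_nonneg_of_le_pi (by linarith) (by linarith)
  have h4 : Real.cos a - Real.cos c ≤ Real.sin (c - a) := by
    rw [h1, h2]
    nlinarith
  rw [Real.sin_sub] at h4
  nlinarith

lemma f_mono {l s t : ℝ} (hl : 0 < l) (hs : 0 ≤ s) (hst : s ≤ t) (ht : l * t < π / 2) :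
    Real.cos (l * s) / (l * (1 - Real.sin (l * s))) ≤
      Real.cos (l * t) / (l * (1 - Real.sin (l * t))) := by
  have h := frac_mono_aux (a := l * s) (c := l * t)
    (by positivity) (by nlinarith) ht
  rw [mul_comm l (1 - Real.sin (l * s)), mul_comm l (1 - Real.sin (l * t)),
    ← div_div, ← div_div]
  gcongr

lemma f_pos {l t : ℝ} (hl : 0 < l) (ht : 0 < t) (hlt : l * t < π / 2) :
    0 < Real.cos (l * t) / (l * (1 - Real.sin (l * t))) := by
  have hpi := Real.pi_pos
  have hc : 0 < Real.cos (l * t) :=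
    Real.cos_pos_of_mem_Ioo ⟨by nlinarith, hlt⟩
  have hs : Real.sin (l * t) < 1 := by
    nlinarith [Real.sin_sq_add_cos_sq (l * t), Real.neg_one_le_sin (l * t),
      Real.sin_le_one (l * t)]
  apply div_pos hc
  have : 0 < 1 - Real.sin (l * t) := by linarith
  positivity

theorem covariance_loewner_bounds_of_delay_uncertainty
    {n : ℕ} (b : ℝ) (hb : 0 < b)
    (lam : Fin (n + 2) → ℝ)
    (hlam_pos : ∀ i : Fin (n + 2), i ≠ 0 → 0 < lam i)
    (hlam_mono : ∀ i j : Fin (n + 2), i ≠ 0 → i ≤ j → lam i ≤ lam j)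
    (f : ℝ → ℝ → ℝ)
    (hf : f = fun l τ => Real.cos (l * τ) / (l * (1 - Real.sin (l * τ))))
    (Q : Matrix (Fin (n + 2)) (Fin (n + 2)) ℝ) (hQ : Qᵀ * Q = 1)
    (M : Matrix (Fin (n + 2)) (Fin (n + 2)) ℝ)
    (hM : M = 1 - ((n + 2 : ℝ))⁻¹ • Matrix.of (fun _ _ => (1 : ℝ)))
    (Sig : ℝ → Matrix (Fin (n + 2)) (Fin (n + 2)) ℝ)
    (hSig : ∀ τ : ℝ, Sig τ =
      (b ^ 2 / 2) •
        (M * Q * Matrix.diagonal (fun i => if i = 0 then 0 else f (lam i) τ) * Qᵀ * M))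
    (τ₀ : ℝ) (hτ₀ : 0 < τ₀) (α : ℝ) (hα : α ∈ Set.Ico (0 : ℝ) 1)
    (hstab : (1 + α) * τ₀ < π / (2 * lam (Fin.last (n + 1))))
    (εp εm : ℝ)
    (hεp : IsGreatest {x : ℝ | ∃ i : Fin (n + 2), i ≠ 0 ∧
      x = (f (lam i) ((1 + α) * τ₀) - f (lam i) τ₀) / f (lam i) τ₀} εp)
    (hεm : IsGreatest {x : ℝ | ∃ i : Fin (n + 2), i ≠ 0 ∧
      x = (f (lam i) τ₀ - f (lam i) ((1 - α) * τ₀)) / f (lam i) τ₀} εm) :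
    ∀ τ : ℝ, (1 - α) * τ₀ ≤ τ → τ ≤ (1 + α) * τ₀ →
      (Sig τ - (1 - εm) • Sig τ₀).PosSemidef ∧
      ((1 + εp) • Sig τ₀ - Sig τ).PosSemidef := by
  intro τ hτl hτu
  obtain ⟨hα0, hα1⟩ := hα
  have hpi := Real.pi_pos
  have hlast : (Fin.last (n + 1) : Fin (n + 2)) ≠ 0 := by
    simp [Fin.ext_iff]
  have hlamN : 0 < lam (Fin.last (n + 1)) := hlam_pos _ hlast
  have hub : 0 < (1 + α) * τ₀ := by nlinarith
  have hstab' : lam (Fin.last (n + 1)) * ((1 + α) * τ₀) < π / 2 := by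
    rw [lt_div_iff₀ (by positivity)] at hstab
    nlinarith
  have hτ0 : 0 ≤ τ := le_trans (by nlinarith) hτl
  have hscal : ∀ i : Fin (n + 2), i ≠ 0 →
      (1 - εm) * f (lam i) τ₀ ≤ f (lam i) τ ∧
      f (lam i) τ ≤ (1 + εp) * f (lam i) τ₀ := by
    intro i hi
    have hli : 0 < lam i := hlam_pos i hi
    have hlin : lam i ≤ lam (Fin.last (n + 1)) := hlam_mono i _ hi (Fin.le_last i)
    have hiub : lam i * ((1 + α) * τ₀) < π / 2 := by nlinarith
    have hfτ₀ : 0 < f (lam i) τ₀ := by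
      rw [hf]; exact f_pos hli hτ₀ (by nlinarith)
    have hmono1 : f (lam i) τ ≤ f (lam i) ((1 + α) * τ₀) := by
      rw [hf]; exact f_mono hli hτ0 hτu hiub
    have hmono2 : f (lam i) ((1 - α) * τ₀) ≤ f (lam i) τ := by
      rw [hf]
      exact f_mono hli (by nlinarith) hτl (by nlinarith)
    have hp := hεp.2 ⟨i, hi, rfl⟩
    have hm := hεm.2 ⟨i, hi, rfl⟩
    rw [div_le_iff₀ hfτ₀] at hp hm
    constructor
    · nlinarith
    · nlinarith
  have hMT : Mᵀ = M := by
    rw [hM]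
    ext i j
    by_cases h : i = j <;>
      simp [Matrix.one_apply, h, eq_comm]
  have key : ∀ (c c' : ℝ) (σ σ' : ℝ),
      c • Sig σ - c' • Sig σ' =
        (M * Q) * Matrix.diagonal (fun i =>
          (c * (b ^ 2 / 2)) * (if i = 0 then 0 else f (lam i) σ)
            - (c' * (b ^ 2 / 2)) * (if i = 0 then 0 else f (lam i) σ')) * (M * Q)ᴴ := by
    intro c c' σ σ'
    have hdiag : Matrix.diagonal (fun i =>
          (c * (b ^ 2 / 2)) * (if i = 0 then 0 else f (lam i) σ)
            - (c' * (b ^ 2 / 2)) * (if i = 0 then 0 else f (lam i) σ')) =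
        (c * (b ^ 2 / 2)) •
            Matrix.diagonal (fun i => if i = 0 then 0 else f (lam i) σ)
          - (c' * (b ^ 2 / 2)) •
            Matrix.diagonal (fun i => if i = 0 then 0 else f (lam i) σ') := by
      ext i j
      by_cases h : i = j <;>
        simp [Matrix.diagonal_apply, h]
    rw [Matrix.conjTranspose_eq_transpose_of_trivial, Matrix.transpose_mul, hMT,
      hSig, hSig, hdiag]
    simp only [Matrix.mul_sub, Matrix.sub_mul, Matrix.mul_smul, Matrix.smul_mul,
      smul_smul, Matrix.mul_assoc]
  have psd : ∀ (g : Fin (n + 2) → ℝ), (∀ i, 0 ≤ g i) →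
      ((M * Q) * Matrix.diagonal g * (M * Q)ᴴ).PosSemidef := by
    intro g hg
    exact (Matrix.PosSemidef.diagonal hg).mul_mul_conjTranspose_same _
  have hb2 : (0 : ℝ) ≤ b ^ 2 / 2 := by positivity
  constructor
  · have e1 : Sig τ - (1 - εm) • Sig τ₀ = (1 : ℝ) • Sig τ - (1 - εm) • Sig τ₀ := by
      rw [one_smul]
    rw [e1, key]
    apply psd
    intro i
    by_cases hi : i = 0
    · simp [hi]
    · simp only [if_neg hi]
      have h := (hscal i hi).1
      nlinarith [mul_nonneg hb2 (sub_nonneg.2 h)]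
  · have e2 : (1 + εp) • Sig τ₀ - Sig τ = (1 + εp) • Sig τ₀ - (1 : ℝ) • Sig τ := by
      rw [one_smul]
    rw [e2, key]
    apply psd
    intro i
    by_cases hi : i = 0
    · simp [hi]
    · simp only [if_neg hi]
      have h := (hscal i hi).2
      nlinarith [mul_nonneg hb2 (sub_nonneg.2 h)]
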